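/- The Leung et al. four-qubit code with codewords |0⟩_L = (1/√2)(|0000⟩+|1111⟩), |1⟩_L = (1/√2)(|0011⟩+|1100⟩) satisfies the Knill–Laflamme error correction conditions for the error set {I, A₁^(1), A₁^(2), A₁^(3), A₁^(4)}, where A₁^(j) denotes the amplitude damping jump operator A₁ = [[0,√γ],[0,0]] acting on qubit j: for all errors E_μ, E_ν in this set, ⟨i_L|E_μ†E_ν|j_L⟩ = C_{μν}δ_{ij} for some constants C_{μν} independent of i, j. -/

import Mathlib

open Matrix Kronecker

noncomputable def A1 (γ : ℝ) : Matrix (Fin 2) (Fin 2) ℂ :=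
  !![0, (Real.sqrt γ : ℂ); 0, 0]

def e (a : Fin 2) : Fin 2 → ℂ := fun i => if i = a then 1 else 0

abbrev Q4 := Fin 2 × Fin 2 × Fin 2 × Fin 2

def ket4 (a b c d : Fin 2) : Q4 → ℂ :=
  fun p => e a p.1 * e b p.2.1 * e c p.2.2.1 * e d p.2.2.2

noncomputable def zeroL : Q4 → ℂ :=
  ((1 / Real.sqrt 2 : ℝ) : ℂ) • (ket4 0 0 0 0 + ket4 1 1 1 1)

noncomputable def oneL : Q4 → ℂ :=
  ((1 / Real.sqrt 2 : ℝ) : ℂ) • (ket4 0 0 1 1 + ket4 1 1 0 0)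

noncomputable def codeword : Fin 2 → (Q4 → ℂ) := ![zeroL, oneL]

noncomputable def I2 : Matrix (Fin 2) (Fin 2) ℂ := 1

/-- the error set {I, A₁⁽¹⁾, A₁⁽²⁾, A₁⁽³⁾, A₁⁽⁴⁾} -/
noncomputable def errs (γ : ℝ) : Fin 5 → Matrix Q4 Q4 ℂ :=
  ![1,
    A1 γ ⊗ₖ (I2 ⊗ₖ (I2 ⊗ₖ I2)),
    I2 ⊗ₖ (A1 γ ⊗ₖ (I2 ⊗ₖ I2)),
    I2 ⊗ₖ (I2 ⊗ₖ (A1 γ ⊗ₖ I2)),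
    I2 ⊗ₖ (I2 ⊗ₖ (I2 ⊗ₖ A1 γ))]


lemma A1_apply (γ : ℝ) (i j : Fin 2) :
    A1 γ i j = if i = 0 ∧ j = 1 then ((Real.sqrt γ : ℝ) : ℂ) else 0 := by
  fin_cases i <;> fin_cases j <;> simp [A1]

noncomputable def V (γ : ℝ) : Fin 5 → Fin 2 → (Q4 → ℂ) :=
  fun μ i =>
    Matrix.of (fun μ i => match μ, i with
      | 0, i => codeword i
      | 1, 0 => ((Real.sqrt γ / Real.sqrt 2 : ℝ) : ℂ) • ket4 0 1 1 1
      | 1, 1 => ((Real.sqrt γ / Real.sqrt 2 : ℝ) : ℂ) • ket4 0 1 0 0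
      | 2, 0 => ((Real.sqrt γ / Real.sqrt 2 : ℝ) : ℂ) • ket4 1 0 1 1
      | 2, 1 => ((Real.sqrt γ / Real.sqrt 2 : ℝ) : ℂ) • ket4 1 0 0 0
      | 3, 0 => ((Real.sqrt γ / Real.sqrt 2 : ℝ) : ℂ) • ket4 1 1 0 1
      | 3, 1 => ((Real.sqrt γ / Real.sqrt 2 : ℝ) : ℂ) • ket4 0 0 0 1
      | 4, 0 => ((Real.sqrt γ / Real.sqrt 2 : ℝ) : ℂ) • ket4 1 1 1 0
      | 4, 1 => ((Real.sqrt γ / Real.sqrt 2 : ℝ) : ℂ) • ket4 0 0 1 0) μ i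

set_option maxHeartbeats 1000000 in
lemma hV (γ : ℝ) : ∀ (μ : Fin 5) (i : Fin 2),
    (errs γ μ).mulVec (codeword i) = V γ μ i := by
  intro μ i
  fin_cases μ <;> fin_cases i <;>
  · funext p
    simp [errs, V, codeword, zeroL, oneL, ket4, e, A1_apply, I2, Matrix.mulVec, dotProduct,
      Fintype.sum_prod_type, Fin.sum_univ_succ, Matrix.kroneckerMap_apply, Matrix.one_apply,
      div_eq_mul_inv]
    try (split_ifs <;> simp_all <;> ring)

lemma key_adj (A B : Matrix Q4 Q4 ℂ) (v w : Q4 → ℂ) :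
    star v ⬝ᵥ ((Aᴴ * B).mulVec w) = star (A.mulVec v) ⬝ᵥ (B.mulVec w) := by
  rw [← Matrix.mulVec_mulVec, Matrix.dotProduct_mulVec, ← Matrix.star_mulVec]

set_option maxHeartbeats 4000000 in
theorem leung_code_knill_laflamme (γ : ℝ) (hγ0 : 0 ≤ γ) (hγ1 : γ ≤ 1) :
    ∃ C : Fin 5 → Fin 5 → ℂ, ∀ (μ ν : Fin 5) (i j : Fin 2),
      star (codeword i) ⬝ᵥ ((errs γ μ)ᴴ * errs γ ν).mulVec (codeword j) =
        C μ ν * (if i = j then 1 else 0) := by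
  have h2 : ((Real.sqrt 2 : ℝ):ℂ) * ((Real.sqrt 2 : ℝ):ℂ) = 2 := by
    rw [← Complex.ofReal_mul, Real.mul_self_sqrt (by norm_num : (0:ℝ) ≤ 2)]; norm_num
  have hg : ((Real.sqrt γ : ℝ):ℂ) * ((Real.sqrt γ : ℝ):ℂ) = γ := by
    rw [← Complex.ofReal_mul, Real.mul_self_sqrt hγ0]
  refine ⟨fun μ ν => if μ = ν then (if μ = 0 then 1 else (γ/2 : ℂ)) else 0, ?_⟩
  intro μ ν i j
  rw [key_adj, hV, hV]
  fin_cases μ <;> fin_cases ν <;> fin_cases i <;> fin_cases j <;>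
  · simp [V, codeword, zeroL, oneL, ket4, e, dotProduct, Fintype.sum_prod_type,
      Fin.sum_univ_succ, Prod.ext_iff]
    try (field_simp; ring_nf; simp [sq, hg, h2])
    try ring
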